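/- Let (a_n)_{n≥1} be a strictly decreasing sequence of positive numbers with a_n → 0 as n → ∞. If there exists an integer N ≥ 1 such that limsup_{n→∞} a_{n+N}/a_n < 1, then for any Lebesgue measurable set E ⊆ ℝ with positive Lebesgue measure, there exists a bi-Lipschitz map f : ℝ → ℝ such that f(a_n) ∈ E for all n ≥ 1. -/

import Mathlib

open MeasureTheory Filter

open Topology

lemma density_lemma (E : Set ℝ) (hE : MeasurableSet E) (hEpos : 0 < volume E) :
    ∃ x₀ : ℝ, ∀ ε : ℝ, 0 < ε → ∃ r₀ : ℝ, 0 < r₀ ∧ ∀ r : ℝ, 0 < r → r ≤ r₀ →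
      volume (Set.Icc (x₀ - r) (x₀ + r) \ E) ≤ ENNReal.ofReal (2 * ε * r) := by
  have hae := Besicovitch.ae_tendsto_measure_inter_div (volume : Measure ℝ) E
  have hne : (volume.restrict E) ≠ 0 := by
    intro h
    rw [← Measure.restrict_apply_univ E, h] at hEpos
    simp at hEpos
  have : (ae (volume.restrict E)).NeBot := ae_neBot.mpr hne
  obtain ⟨x₀, hx₀⟩ := hae.exists
  refine ⟨x₀, fun ε hε => ?_⟩
  by_cases hε1 : (1:ℝ) ≤ ε
  · refine ⟨1, one_pos, fun r hr _ => ?_⟩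
    calc volume (Set.Icc (x₀ - r) (x₀ + r) \ E) ≤ volume (Set.Icc (x₀ - r) (x₀ + r)) :=
          measure_mono Set.diff_subset
      _ = ENNReal.ofReal (2 * r) := by rw [Real.volume_Icc]; ring_nf
      _ ≤ ENNReal.ofReal (2 * ε * r) := by
          apply ENNReal.ofReal_le_ofReal; nlinarith
  · push_neg at hε1
    have hev : ∀ᶠ r in 𝓝[>] (0:ℝ),
        ENNReal.ofReal (1 - ε) < volume (E ∩ Metric.closedBall x₀ r) / volume (Metric.closedBall x₀ r) :=
      hx₀.eventually_const_lt (ENNReal.ofReal_lt_one.mpr (by linarith))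
    obtain ⟨r₀, hr₀, hsub⟩ := mem_nhdsGT_iff_exists_Ioc_subset.mp hev
    refine ⟨r₀, hr₀, fun r hr hrr₀ => ?_⟩
    have hball : Metric.closedBall x₀ r = Set.Icc (x₀ - r) (x₀ + r) := Real.closedBall_eq_Icc
    have hmem := hsub (Set.mem_Ioc.mpr ⟨hr, hrr₀⟩)
    have hvol : volume (Metric.closedBall x₀ r) = ENNReal.ofReal (2 * r) := by
      rw [hball, Real.volume_Icc]; ring_nf
    have hvne : volume (Metric.closedBall x₀ r) ≠ 0 := by
      rw [hvol]; simp [ENNReal.ofReal_eq_zero]; linarith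
    have hvnt : volume (Metric.closedBall x₀ r) ≠ ⊤ := by rw [hvol]; exact ENNReal.ofReal_ne_top
    have hmul : ENNReal.ofReal (1 - ε) * volume (Metric.closedBall x₀ r)
        < volume (E ∩ Metric.closedBall x₀ r) := by
      rw [← ENNReal.lt_div_iff_mul_lt (Or.inl hvne) (Or.inl hvnt)]
      exact hmem
    have key : volume (Metric.closedBall x₀ r)
        ≤ ENNReal.ofReal (2 * ε * r) + volume (E ∩ Metric.closedBall x₀ r) := by
      calc volume (Metric.closedBall x₀ r) = ENNReal.ofReal (2 * r) := hvol
        _ ≤ ENNReal.ofReal (2 * ε * r) + ENNReal.ofReal ((1 - ε) * (2 * r)) := by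
            rw [← ENNReal.ofReal_add (by positivity) (by nlinarith)]
            apply ENNReal.ofReal_le_ofReal; nlinarith
        _ ≤ ENNReal.ofReal (2 * ε * r) + volume (E ∩ Metric.closedBall x₀ r) := by
            gcongr
            calc ENNReal.ofReal ((1 - ε) * (2 * r))
                = ENNReal.ofReal (1 - ε) * volume (Metric.closedBall x₀ r) := by
                  rw [hvol, ENNReal.ofReal_mul (by linarith)]
              _ ≤ volume (E ∩ Metric.closedBall x₀ r) := hmul.le
    have hdiff : volume (Metric.closedBall x₀ r \ E)
        = volume (Metric.closedBall x₀ r) - volume (E ∩ Metric.closedBall x₀ r) := by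
      have heq : Metric.closedBall x₀ r \ E
          = Metric.closedBall x₀ r \ (E ∩ Metric.closedBall x₀ r) := by
        ext z; simp only [Set.mem_diff, Set.mem_inter_iff]; tauto
      rw [heq, measure_diff Set.inter_subset_right
        ((hE.inter Metric.isClosed_closedBall.measurableSet).nullMeasurableSet)
        (ne_top_of_le_ne_top hvnt (measure_mono Set.inter_subset_right))]
    rw [← hball, hdiff]
    exact tsub_le_iff_right.mpr key

lemma shift_lemma (E : Set ℝ) (hE : MeasurableSet E) (x₀ ε r₀ : ℝ)
    (hden : ∀ r : ℝ, 0 < r → r ≤ r₀ →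
      volume (Set.Icc (x₀ - r) (x₀ + r) \ E) ≤ ENNReal.ofReal (2 * ε * r))
    (s : Finset ℕ) (p : ℕ → ℝ) (r η : ℝ) (hη : 0 < η) (hr : 0 < r)
    (hwin : r + η ≤ r₀)
    (hp : ∀ i ∈ s, p i ∈ Set.Icc x₀ (x₀ + r))
    (hcard : (s.card : ℝ) * (2 * ε * (r + η)) < η) :
    ∃ τ : ℝ, 0 ≤ τ ∧ τ ≤ η ∧ ∀ i ∈ s, p i + τ ∈ E := by
  set Bad : Set ℝ := ⋃ i ∈ s, ((fun τ => p i + τ) ⁻¹' (Set.Icc (x₀ - (r + η)) (x₀ + (r + η)) \ E))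
    with hBad
  have hbound : volume Bad < volume (Set.Icc (0:ℝ) η) := by
    have h1 : volume Bad ≤ ∑ i ∈ s, volume
        ((fun τ => p i + τ) ⁻¹' (Set.Icc (x₀ - (r + η)) (x₀ + (r + η)) \ E)) :=
      measure_biUnion_finset_le s _
    have h2 : ∀ i ∈ s, volume
        ((fun τ => p i + τ) ⁻¹' (Set.Icc (x₀ - (r + η)) (x₀ + (r + η)) \ E))
        ≤ ENNReal.ofReal (2 * ε * (r + η)) := by
      intro i _
      rw [measure_preimage_add]
      exact hden (r + η) (by linarith) hwin
    have hcard' : (s.card : ℝ) * (2 * ε * (r + η)) < η := hcard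
    calc volume Bad ≤ ∑ _i ∈ s, ENNReal.ofReal (2 * ε * (r + η)) :=
          h1.trans (Finset.sum_le_sum h2)
      _ = (s.card : ENNReal) * ENNReal.ofReal (2 * ε * (r + η)) := by
          rw [Finset.sum_const, nsmul_eq_mul]
      _ < ENNReal.ofReal η := by
          rw [← ENNReal.ofReal_natCast, ← ENNReal.ofReal_mul (by positivity)]
          exact (ENNReal.ofReal_lt_ofReal_iff hη).mpr hcard'
      _ = volume (Set.Icc (0:ℝ) η) := by rw [Real.volume_Icc]; simp
  have hnsub : ¬ (Set.Icc (0:ℝ) η ⊆ Bad) := fun h => absurd (measure_mono h) (not_le.mpr hbound)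
  obtain ⟨τ, hτIcc, hτBad⟩ := Set.not_subset.mp hnsub
  obtain ⟨hτ0, hτη⟩ := hτIcc
  refine ⟨τ, hτ0, hτη, fun i hi => ?_⟩
  by_contra hniE
  apply hτBad
  rw [hBad]
  apply Set.mem_biUnion hi
  refine ⟨?_, hniE⟩
  obtain ⟨hp1, hp2⟩ := hp i hi
  constructor <;> simp only [Set.mem_Icc] <;> nlinarith [hp1, hp2]

lemma interp_lemma (a : ℕ → ℝ) (b : ℕ → ℝ) (c : ℝ) (hc : 0 < c)
    (hpos : ∀ n, 1 ≤ n → 0 < a n) (hdec : ∀ n, 1 ≤ n → a (n + 1) < a n)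
    (hlim : Tendsto a atTop (nhds 0))
    (hslope : ∀ n, 1 ≤ n →
      c / 2 * (a n - a (n + 1)) ≤ b n - b (n + 1) ∧
      b n - b (n + 1) ≤ 3 * c / 2 * (a n - a (n + 1))) :
    ∃ f : ℝ → ℝ,
      (∀ x y : ℝ, y < x → c / 2 * (x - y) ≤ f x - f y ∧ f x - f y ≤ 3 * c / 2 * (x - y)) ∧
      ∀ n, 1 ≤ n → f (a n) = b n := by
  classical
  have hanti : ∀ i j, 1 ≤ i → i ≤ j → a j ≤ a i := by
    intro i j hi hij
    induction j with
    | zero => omega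
    | succ k ih =>
      rcases Nat.lt_or_ge i (k + 1) with h | h
      · exact le_trans (hdec k (by omega)).le (ih (by omega))
      · have : i = k + 1 := by omega
        subst this; rfl
  set S : ℝ → Set ℕ := fun x => {n | a (n + 1) ≤ x} with hS
  set idx : ℝ → ℕ := fun x => sInf (S x) with hidx
  have hSne : ∀ x : ℝ, 0 < x → (S x).Nonempty := by
    intro x hx
    obtain ⟨n₀, hn₀⟩ := eventually_atTop.mp (hlim.eventually (eventually_lt_nhds hx))
    exact ⟨n₀, (hn₀ (n₀ + 1) (by omega)).le⟩
  -- characterization of idx on the middle region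
  have hidx_mem : ∀ n, 1 ≤ n → ∀ x ∈ Set.Ico (a (n + 1)) (a n), idx x = n := by
    intro n hn x hx
    obtain ⟨hx1, hx2⟩ := hx
    have hmem : n ∈ S x := hx1
    have hnot : ∀ k, k < n → k ∉ S x := by
      intro k hk hkS
      have : a n ≤ a (k + 1) := hanti (k + 1) n (by omega) (by omega)
      have : a n ≤ x := le_trans this hkS
      linarith
    exact le_antisymm (Nat.sInf_le hmem)
      (by
        by_contra h
        push_neg at h
        exact hnot _ h (Nat.sInf_mem ⟨n, hmem⟩))
  have hidx_ge : ∀ x ∈ Set.Ioo (0:ℝ) (a 1), 1 ≤ idx x := by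
    intro x hx
    by_contra h
    push_neg at h
    interval_cases h' : idx x
    · have : (0:ℕ) ∈ S x := h' ▸ Nat.sInf_mem (hSne x hx.1)
      have : a 1 ≤ x := this
      linarith [hx.2]
  have hidx_le : ∀ x ∈ Set.Ioo (0:ℝ) (a 1), a (idx x + 1) ≤ x := by
    intro x hx
    exact Nat.sInf_mem (hSne x hx.1)
  -- measurability of idx
  have hidx_meas : Measurable idx := by
    apply measurable_to_countable'
    intro n
    match n with
    | 0 =>
      have : idx ⁻¹' {0} = {x | a 1 ≤ x} ∪ ⋂ k, {x | x < a (k + 1)} := by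
        ext x
        simp only [Set.mem_preimage, Set.mem_singleton_iff, Set.mem_union, Set.mem_iInter,
          Set.mem_setOf_eq, hidx]
        rw [Nat.sInf_eq_zero]
        constructor
        · rintro (h0 | hemp)
          · exact Or.inl h0
          · refine Or.inr fun k => ?_
            by_contra hk
            push_neg at hk
            exact absurd hemp (Set.nonempty_iff_ne_empty.mp ⟨k, hk⟩)
        · rintro (h0 | hall)
          · exact Or.inl h0
          · refine Or.inr (Set.eq_empty_iff_forall_notMem.mpr fun k hk => ?_)
            exact absurd hk (not_le.mpr (hall k))
      rw [this]
      exact (measurableSet_le measurable_const measurable_id).union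
        (MeasurableSet.iInter fun k => measurableSet_lt measurable_id measurable_const)
    | (m + 1) =>
      have : idx ⁻¹' {m + 1} = Set.Ico (a (m + 2)) (a (m + 1)) := by
        ext x
        simp only [Set.mem_preimage, Set.mem_singleton_iff, Set.mem_Ico]
        constructor
        · intro h
          have h' : sInf (S x) = m + 1 := h
          have hne : (S x).Nonempty := by
            by_contra hemp
            rw [Set.not_nonempty_iff_eq_empty] at hemp
            simp only [hemp, Nat.sInf_empty] at h'
            omega
          have h1 : a (m + 1 + 1) ≤ x := h' ▸ Nat.sInf_mem hne
          have h2 : m ∉ S x := by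
            intro hm
            have := Nat.sInf_le hm
            omega
          exact ⟨h1, lt_of_not_ge h2⟩
        · rintro ⟨h1, h2⟩
          exact hidx_mem (m + 1) (by omega) x ⟨h1, h2⟩
      rw [this]
      exact measurableSet_Ico
  -- slopes
  set slope : ℕ → ℝ := fun n => (b n - b (n + 1)) / (a n - a (n + 1)) with hslopedef
  have hslope_bd : ∀ n, 1 ≤ n → c / 2 ≤ slope n ∧ slope n ≤ 3 * c / 2 := by
    intro n hn
    have hg : 0 < a n - a (n + 1) := by linarith [hdec n hn]
    obtain ⟨h1, h2⟩ := hslope n hn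
    constructor
    · rw [hslopedef, le_div_iff₀ hg]; linarith
    · rw [hslopedef, div_le_iff₀ hg]; linarith
  -- the weight function
  set w : ℝ → ℝ := fun x => if x ∈ Set.Ioo (0:ℝ) (a 1) then slope (idx x) else c with hw
  have hw_bd : ∀ x, c / 2 ≤ w x ∧ w x ≤ 3 * c / 2 := by
    intro x
    rw [hw]
    by_cases h : x ∈ Set.Ioo (0:ℝ) (a 1)
    · simp only [h, if_true]
      exact hslope_bd (idx x) (hidx_ge x h)
    · simp only [h, if_false]
      constructor <;> linarith
  have hw_meas : Measurable w := by
    apply Measurable.ite measurableSet_Ioo ?_ measurable_const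
    exact ((measurable_from_top : Measurable slope).comp hidx_meas)
  have hw_int : ∀ y x : ℝ, IntervalIntegrable w volume y x := by
    intro y x
    rw [intervalIntegrable_iff]
    apply Measure.integrableOn_of_bounded (M := 3 * c / 2)
    · exact ne_of_lt (measure_Ioc_lt_top)
    · exact hw_meas.aestronglyMeasurable
    · apply ae_of_all
      intro z
      rw [Real.norm_eq_abs, abs_le]
      constructor <;> [linarith [(hw_bd z).1]; exact (hw_bd z).2]
  -- the function
  set f : ℝ → ℝ := fun x => b 1 + ∫ t in (a 1)..x, w t with hf
  have hstepint : ∀ n, 1 ≤ n → (∫ t in (a (n + 1))..(a n), w t) = b n - b (n + 1) := by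
    intro n hn
    have hle : a (n + 1) ≤ a n := (hdec n hn).le
    have hcong : ∀ᵐ t ∂(volume : Measure ℝ), t ∈ Set.uIoc (a (n + 1)) (a n) → w t = slope n := by
      have hnull : (volume : Measure ℝ) {a n} = 0 := measure_singleton _
      rw [ae_iff]
      apply measure_mono_null ?_ hnull
      intro t ht
      simp only [Set.mem_setOf_eq, not_forall] at ht
      obtain ⟨htmem, htne⟩ := ht
      rw [Set.uIoc_of_le hle] at htmem
      obtain ⟨ht1, ht2⟩ := htmem
      simp only [Set.mem_singleton_iff]
      by_contra htn
      apply htne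
      have htIco : t ∈ Set.Ico (a (n + 1)) (a n) := ⟨ht1.le, lt_of_le_of_ne ht2 htn⟩
      have htIoo : t ∈ Set.Ioo (0:ℝ) (a 1) := by
        constructor
        · linarith [hpos (n + 1) (by omega), htIco.1]
        · exact lt_of_lt_of_le htIco.2 (hanti 1 n (by omega) hn)
      rw [hw]
      simp only [htIoo, if_true]
      rw [hidx_mem n hn t htIco]
    rw [intervalIntegral.integral_congr_ae hcong, intervalIntegral.integral_const]
    rw [hslopedef]
    have hg : a n - a (n + 1) ≠ 0 := by linarith [hdec n hn]
    rw [smul_eq_mul]; field_simp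
  have hnode : ∀ n, 1 ≤ n → f (a n) = b n := by
    intro n hn
    induction n with
    | zero => omega
    | succ m ih =>
      rcases Nat.eq_or_lt_of_le hn with h | h
      · rw [hf]
        simp only [← h]
        rw [intervalIntegral.integral_same]
        ring
      · have hm : 1 ≤ m := by omega
        have hadd := intervalIntegral.integral_add_adjacent_intervals
          (hw_int (a 1) (a m)) (hw_int (a m) (a (m + 1)))
        have hrev : (∫ t in (a m)..(a (m + 1)), w t) = -(b m - b (m + 1)) := by
          rw [intervalIntegral.integral_symm, hstepint m hm]
        have hthis := ih hm
        have key : f (a (m + 1)) = f (a m) - (b m - b (m + 1)) := by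
          simp only [hf]
          rw [← hadd, hrev]
          ring
        rw [key, hthis]
        ring
  refine ⟨f, fun x y hyx => ?_, hnode⟩
  have hdiffint : f x - f y = ∫ t in y..x, w t := by
    simp only [hf]
    have := intervalIntegral.integral_interval_sub_left (hw_int (a 1) x) (hw_int (a 1) y)
    linarith [this]
  have hlow : c / 2 * (x - y) ≤ ∫ t in y..x, w t := by
    have := intervalIntegral.integral_mono_on hyx.le (intervalIntegrable_const (c := c / 2))
      (hw_int y x) (fun t _ => (hw_bd t).1)
    rw [intervalIntegral.integral_const] at this
    calc c / 2 * (x - y) = (x - y) • (c / 2) := by rw [smul_eq_mul]; ring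
      _ ≤ _ := this
  have hhigh : (∫ t in y..x, w t) ≤ 3 * c / 2 * (x - y) := by
    have := intervalIntegral.integral_mono_on hyx.le (hw_int y x)
      (intervalIntegrable_const (c := 3 * c / 2)) (fun t _ => (hw_bd t).2)
    rw [intervalIntegral.integral_const] at this
    calc (∫ t in y..x, w t) ≤ (x - y) • (3 * c / 2) := this
      _ = 3 * c / 2 * (x - y) := by rw [smul_eq_mul]; ring
  rw [hdiffint]
  exact ⟨hlow, hhigh⟩
set_option maxHeartbeats 2000000 in
theorem stmt2 (a : ℕ → ℝ) (hpos : ∀ n ≥ 1, 0 < a n)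
    (hdec : ∀ n ≥ 1, a (n + 1) < a n)
    (hlim : Tendsto a atTop (nhds 0))
    (N : ℕ) (hN : 1 ≤ N)
    (hlimsup : Filter.limsup (fun n => a (n + N) / a n) atTop < 1)
    (E : Set ℝ) (hE : MeasurableSet E) (hEpos : 0 < volume E) :
    ∃ f : ℝ → ℝ, (∃ L : ℝ, 1 < L ∧ ∀ x y : ℝ,
        L⁻¹ * |x - y| ≤ |f x - f y| ∧ |f x - f y| ≤ L * |x - y|) ∧
      ∀ n ≥ 1, f (a n) ∈ E := by
  classical
  -- antitonicity of a on indices ≥ 1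
  have hanti : ∀ i j, 1 ≤ i → i ≤ j → a j ≤ a i := by
    intro i j hi hij
    induction j with
    | zero => omega
    | succ k ih =>
      rcases Nat.lt_or_ge i (k + 1) with h | h
      · exact le_trans (hdec k (by omega)).le (ih (by omega))
      · have : i = k + 1 := by omega
        subst this; rfl
  -- Step 1 : geometric decay constant ρ and threshold M
  set l := Filter.limsup (fun n => a (n + N) / a n) atTop with hl
  have hbdd : IsBoundedUnder (· ≤ ·) atTop (fun n => a (n + N) / a n) := by
    refine isBoundedUnder_of_eventually_le (a := 1) ?_
    filter_upwards [eventually_ge_atTop 1] with n hn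
    exact div_le_one_of_le₀ (hanti n (n + N) hn (by omega)) (hpos n hn).le
  set ρ : ℝ := (max l 0 + 1) / 2 with hρ
  have hρ1 : ρ < 1 := by
    have : max l 0 < 1 := max_lt hlimsup one_pos
    rw [hρ]; linarith
  have hρ0 : 0 < ρ := by
    have : (0:ℝ) ≤ max l 0 := le_max_right _ _
    rw [hρ]; linarith
  have hev : ∀ᶠ n in atTop, a (n + N) / a n < ρ := by
    apply eventually_lt_of_limsup_lt ?_ hbdd
    have : l ≤ max l 0 := le_max_left _ _
    rw [← hl, hρ]; linarith
  obtain ⟨M₀, hM₀⟩ := eventually_atTop.mp hev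
  clear hev hbdd hlimsup hl
  set M : ℕ := max M₀ 1 with hM
  have hM1 : 1 ≤ M := le_max_right _ _
  have hMprop : ∀ n, M ≤ n → a (n + N) ≤ ρ * a n := by
    intro n hn
    have h1 : 1 ≤ n := le_trans hM1 hn
    have := hM₀ n (le_trans (le_max_left _ _) hn)
    exact ((div_lt_iff₀ (hpos n h1)).mp this).le
  clear hρ hM hM₀
  clear_value ρ M
  clear l
  -- Step 2 : block boundary selection
  set c₁ : ℝ := (1 - ρ) / N with hc₁
  have hc₁pos : 0 < c₁ := by
    apply div_pos (by linarith)
    exact_mod_cast Nat.pos_of_ne_zero (by omega)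
  have hbdry : ∀ p : ℕ, ∃ j : ℕ, M ≤ p →
      (p < j ∧ j ≤ p + N ∧ c₁ * a (p + 1) ≤ a j - a (j + 1)) := by
    intro p
    by_cases hp : M ≤ p
    · by_contra hno
      push_neg at hno
      have hall : ∀ i ∈ Finset.range N, a (p + 1 + i) - a (p + 1 + i + 1) < c₁ * a (p + 1) := by
        intro i hi
        simp only [Finset.mem_range] at hi
        exact (hno (p + 1 + i)).2 (by omega) (by omega)
      have htel : ∑ i ∈ Finset.range N, (a (p + 1 + i) - a (p + 1 + i + 1))
          = a (p + 1) - a (p + 1 + N) := by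
        have := Finset.sum_range_sub' (f := fun i => a (p + 1 + i)) N
        simpa [add_assoc] using this
      have hsum : ∑ i ∈ Finset.range N, (a (p + 1 + i) - a (p + 1 + i + 1))
          < N * (c₁ * a (p + 1)) := by
        have := Finset.sum_lt_sum_of_nonempty (s := Finset.range N)
          (Finset.nonempty_range_iff.mpr (by omega)) hall
        simpa [Finset.sum_const, Finset.card_range, nsmul_eq_mul] using this
      have hgeo : a (p + 1 + N) ≤ ρ * a (p + 1) := by
        exact hMprop (p + 1) (by omega)
      have hNc : (N:ℝ) * c₁ = 1 - ρ := by
        rw [hc₁]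
        field_simp
      nlinarith [htel, hsum, hgeo, hpos (p + 1) (by omega)]
    · exact ⟨0, fun h => absurd h hp⟩
  clear hc₁
  clear_value c₁
  choose nxt hnxt using hbdry
  set μ : ℕ → ℕ := fun k => nxt^[k] M with hμ
  have hμ0 : μ 0 = M := rfl
  have hμM : ∀ k, M ≤ μ k := by
    intro k
    induction k with
    | zero => exact le_refl M
    | succ k ih =>
      have : μ (k + 1) = nxt (μ k) := Function.iterate_succ_apply' nxt k M
      rw [this]
      exact le_trans ih (hnxt (μ k) ih).1.le
  have hμspec : ∀ k, μ k < μ (k + 1) ∧ μ (k + 1) ≤ μ k + N ∧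
      c₁ * a (μ k + 1) ≤ a (μ (k + 1)) - a (μ (k + 1) + 1) := by
    intro k
    have heq : μ (k + 1) = nxt (μ k) := Function.iterate_succ_apply' nxt k M
    rw [heq]
    exact hnxt (μ k) (hμM k)
  clear hμ hnxt
  clear_value μ
  clear nxt
  -- Step 3 : density point and scales
  obtain ⟨x₀, hden0⟩ := density_lemma E hE hEpos
  have ha1 : 0 < a 1 := hpos 1 le_rfl
  set G : ℕ → ℝ := fun k => a (μ k) - a (μ k + 1) with hG
  have hGdef : ∀ k, G k = a (μ k) - a (μ k + 1) := fun k => rfl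
  have hGpos : ∀ k, 1 ≤ k → 0 < G k := by
    intro k hk
    exact sub_pos.mpr (hdec (μ k) (le_trans hM1 (hμM k)))
  have hGle : ∀ k, 1 ≤ k → G k ≤ a (μ k) := by
    intro k hk
    have := hpos (μ k + 1) (by omega)
    rw [hGdef]; linarith
  have hGgap : ∀ k, c₁ * a (μ k + 1) ≤ G (k + 1) := by
    intro k
    rw [hGdef]
    exact (hμspec k).2.2
  clear hG
  clear_value G
  have hμ1pos : 1 ≤ μ 1 := le_trans hM1 (hμM 1)
  have haμ1 : a (μ 1) ≤ a 1 := hanti 1 (μ 1) le_rfl hμ1pos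
  set ε : ℝ := min (c₁ / (32 * N)) (G 1 / (32 * (μ 1) * a 1)) with hεdef
  have hμ1R : (1:ℝ) ≤ (μ 1 : ℝ) := by exact_mod_cast hμ1pos
  have hNR : (1:ℝ) ≤ (N : ℝ) := by exact_mod_cast hN
  have hεpos : 0 < ε := by
    apply lt_min
    · apply div_pos hc₁pos
      positivity
    · apply div_pos (hGpos 1 le_rfl)
      have : (0:ℝ) < (μ 1 : ℝ) := by exact_mod_cast hμ1pos
      positivity
  have hε1 : ε ≤ c₁ / (32 * N) := min_le_left _ _
  have hε2 : ε ≤ G 1 / (32 * (μ 1) * a 1) := min_le_right _ _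
  clear hεdef
  clear_value ε
  obtain ⟨r₀, hr₀pos, hden⟩ := hden0 ε hεpos
  set cc : ℝ := r₀ / (2 * a 1) with hcc
  have hccpos : 0 < cc := by
    apply div_pos hr₀pos
    positivity
  have hcca1 : cc * a 1 = r₀ / 2 := by
    rw [hcc]; field_simp
  clear hcc
  clear_value cc
  -- Step 4 : block shifts
  set m : ℕ → ℕ := fun k => if k = 0 then 0 else μ k with hm
  have hm0 : m 0 = 0 := by simp [hm]
  have hms : ∀ k, m (k + 1) = μ (k + 1) := fun k => by rw [hm]; simp
  clear hm
  clear_value m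
  set η : ℕ → ℝ := fun k => cc / 4 * min (G (max k 1)) (G (k + 1)) with hηdef
  have hη0 : η 0 = cc / 4 * G 1 := by rw [hηdef]; norm_num
  have hηmin : ∀ k, η k = cc / 4 * min (G (max k 1)) (G (k + 1)) := fun k => rfl
  have hηpos : ∀ k, 0 < η k := by
    intro k
    rw [hηmin]
    apply mul_pos (by positivity)
    exact lt_min (hGpos _ (le_max_right _ _)) (hGpos _ (by omega))
  have hη_le : ∀ k, η k ≤ cc / 4 * G (k + 1) := by
    intro k
    rw [hηmin]
    apply mul_le_mul_of_nonneg_left (min_le_right _ _) (by positivity)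
  have hGk1_le : ∀ k, G (k + 1) ≤ a (μ k + 1) := by
    intro k
    have h1 : a (μ (k + 1)) ≤ a (μ k + 1) := by
      apply hanti (μ k + 1) (μ (k + 1)) (by omega) (hμspec k).1
    have h2 : 0 < a (μ (k + 1) + 1) := hpos _ (by omega)
    rw [hGdef]; linarith
  have hη_le' : ∀ k, η k ≤ cc / 4 * a 1 := by
    intro k
    refine le_trans (hη_le k) ?_
    apply mul_le_mul_of_nonneg_left ?_ (by positivity)
    exact le_trans (hGk1_le k) (hanti 1 (μ k + 1) le_rfl (by omega))
  clear hηdef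
  clear_value η
  have ht : ∀ k, ∃ τ : ℝ, 0 ≤ τ ∧ τ ≤ η k ∧
      ∀ i ∈ Finset.Ioc (m k) (m (k + 1)), x₀ + cc * a i + τ ∈ E := by
    intro k
    apply shift_lemma E hE x₀ ε r₀ hden _ _ (cc * a (m k + 1)) (η k) (hηpos k)
      (mul_pos hccpos (hpos _ (by omega)))
    · -- window
      have h1 : a (m k + 1) ≤ a 1 := hanti 1 (m k + 1) le_rfl (by omega)
      have h2 := hη_le' k
      have h3 : cc * a (m k + 1) ≤ cc * a 1 := by
        apply mul_le_mul_of_nonneg_left h1 hccpos.le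
      rw [hcca1] at h3
      have h4 : cc / 4 * a 1 ≤ r₀ / 2 := by
        nlinarith [hcca1, hccpos.le, ha1.le, hr₀pos.le]
      linarith
    · -- points in window
      intro i hi
      simp only [Finset.mem_Ioc] at hi
      have hi1 : 1 ≤ i := by omega
      have h1 : 0 < a i := hpos i hi1
      have h2 : a i ≤ a (m k + 1) := hanti (m k + 1) i (by omega) (by omega)
      constructor
      · nlinarith
      · nlinarith
    · -- cardinality bound
      rw [Nat.card_Ioc]
      rcases k with _ | j
      ·
        rw [hm0, hms]
        simp only [Nat.sub_zero]
        have hDpos : (0:ℝ) < 32 * (μ 1 : ℝ) * a 1 := by nlinarith [hμ1R, ha1]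
        have hε2' : ε * (32 * (μ 1) * a 1) ≤ G 1 := (le_div_iff₀ hDpos).mp hε2
        have hG1a : G 1 ≤ a 1 := le_trans (hGle 1 le_rfl) haμ1
        rw [hη0]
        have hG1pos := hGpos 1 le_rfl
        have h01 : a (0 + 1) = a 1 := by norm_num
        rw [h01]
        have hint1 := mul_le_mul_of_nonneg_right hε2' hccpos.le
        have hint2 : (0:ℝ) ≤ ε * cc * (μ 1) := by positivity
        have hint3 := mul_le_mul_of_nonneg_left hG1a hint2
        nlinarith [hεpos.le, hccpos.le, mul_pos hccpos hG1pos, hint1, hint2, hint3, hμ1R]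
      ·
        have hcard : ((m (j + 2) - m (j + 1) : ℕ) : ℝ) ≤ (N : ℝ) := by
          have h1 := (hμspec (j + 1)).2.1
          have : m (j + 2) - m (j + 1) ≤ N := by
            rw [hms, hms]; omega
          exact_mod_cast this
        set A := a (m (j + 1) + 1) with hA
        have hApos : 0 < A := hpos _ (by omega)
        have hAle : A ≤ a 1 := hanti 1 _ le_rfl (by omega)
        have hlow : c₁ * A ≤ min (G (max (j + 1) 1)) (G (j + 2)) := by
          have hmax : max (j + 1) 1 = j + 1 := by omega
          rw [hmax]
          apply le_min
          · -- G (j+1) ≥ c₁ a (μ j + 1) ≥ c₁ A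
            have h1 := hGgap j
            have h2 : a (μ (j + 1) + 1) ≤ a (μ j + 1) :=
              hanti (μ j + 1) (μ (j + 1) + 1) (by omega)
                (by have := (hμspec j).1; omega)
            have h3 : A = a (μ (j + 1) + 1) := by rw [hA, hms]
            rw [h3]
            calc c₁ * a (μ (j + 1) + 1) ≤ c₁ * a (μ j + 1) := by
                  apply mul_le_mul_of_nonneg_left h2 hc₁pos.le
              _ ≤ G (j + 1) := h1
          · have h1 := hGgap (j + 1)
            have h3 : A = a (μ (j + 1) + 1) := by rw [hA, hms]
            rw [h3]
            exact h1
        have hupp : min (G (max (j + 1) 1)) (G (j + 2)) ≤ A := by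
          refine le_trans (min_le_right _ _) ?_
          rw [hA, hms]
          exact hGk1_le (j + 1)
        have hDpos : (0:ℝ) < 32 * (N : ℝ) := by nlinarith [hNR]
        have hε1' : ε * (32 * N) ≤ c₁ := (le_div_iff₀ hDpos).mp hε1
        rw [hηmin (j + 1)]
        have hint1 := mul_le_mul_of_nonneg_right hε1' (mul_pos hccpos hApos).le
        have hmn1 := mul_le_mul_of_nonneg_left hlow (by positivity : (0:ℝ) ≤ cc / 4)
        have hmn2 := mul_le_mul_of_nonneg_left hupp (by positivity : (0:ℝ) ≤ cc / 4)
        have hfac : (0:ℝ) ≤ 2 * ε * (cc * A + cc / 4 * min (G (max (j + 1) 1)) (G (j + 2))) := by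
          have hmnpos : 0 < min (G (max (j + 1) 1)) (G (j + 2)) :=
            lt_min (hGpos (max (j + 1) 1) (le_max_right _ _)) (hGpos (j + 2) (by omega))
          positivity
        have hint2 := mul_le_mul_of_nonneg_right hcard hfac
        have hccA : (0:ℝ) < cc * A := mul_pos hccpos hApos
        nlinarith [hεpos.le, hc₁pos.le, mul_pos (mul_pos hccpos hApos) hc₁pos, hint1, hmn1, hmn2, hint2, hNR]
  choose t ht0 htη htE using ht
  -- Step 5 : block index of each n
  have hm_lt : ∀ k, m k < m (k + 1) := by
    intro k
    rcases k with _ | j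
    · rw [hm0, hms]
      have := hμM (0 + 1)
      omega
    · rw [hms, hms]
      exact (hμspec (j + 1)).1
  have hm_mono : Monotone m := monotone_nat_of_le_succ (fun k => (hm_lt k).le)
  have hμ_ge : ∀ k, k ≤ μ k := by
    intro k
    induction k with
    | zero => omega
    | succ j ih =>
      have := (hμspec j).1
      omega
  have exm : ∀ n : ℕ, ∃ k, n ≤ m (k + 1) := by
    intro n
    refine ⟨n, ?_⟩
    rw [hms]
    have := hμ_ge (n + 1)
    omega
  set K : ℕ → ℕ := fun n => Nat.find (exm n) with hKdef
  have hK_ub : ∀ n, n ≤ m (K n + 1) := fun n => Nat.find_spec (exm n)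
  have hK_min : ∀ n k, n ≤ m (k + 1) → K n ≤ k := fun n k h => Nat.find_le h
  have hK_lb : ∀ n, 1 ≤ n → m (K n) < n := by
    intro n hn
    rcases hKn : K n with _ | k
    · rw [hm0]
      omega
    · have hlt : k < Nat.find (exm n) := by
        have : Nat.find (exm n) = K n := rfl
        omega
      have hmin := Nat.find_min (exm n) hlt
      push_neg at hmin
      omega
  clear hKdef
  clear_value K
  have hKstep : ∀ n, 1 ≤ n → K (n + 1) = K n ∨
      (n = m (K n + 1) ∧ K (n + 1) = K n + 1) := by
    intro n hn
    by_cases hcase : n + 1 ≤ m (K n + 1)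
    · left
      have h1 : K (n + 1) ≤ K n := hK_min (n + 1) (K n) hcase
      have h2 : K n ≤ K (n + 1) :=
        hK_min n (K (n + 1)) (le_trans (by omega) (hK_ub (n + 1)))
      omega
    · right
      have h1 : n = m (K n + 1) := by
        have := hK_ub n
        omega
      have h2 : n + 1 ≤ m (K n + 1 + 1) := by
        have := hm_lt (K n + 1)
        omega
      have hle : K (n + 1) ≤ K n + 1 := hK_min _ _ h2
      have hgt : K n < K (n + 1) := by
        by_contra hle2
        push_neg at hle2
        have h3 : n + 1 ≤ m (K (n + 1) + 1) := hK_ub (n + 1)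
        have h4 : m (K (n + 1) + 1) ≤ m (K n + 1) := hm_mono (by omega)
        omega
      exact ⟨h1, by omega⟩
  -- Step 6 : the node values
  set b : ℕ → ℝ := fun n => x₀ + cc * a n + t (K n) with hbdef
  have hbE : ∀ n, 1 ≤ n → b n ∈ E := by
    intro n hn
    exact htE (K n) n (Finset.mem_Ioc.mpr ⟨hK_lb n hn, hK_ub n⟩)
  have hbB : ∀ n, 1 ≤ n → cc / 2 * (a n - a (n + 1)) ≤ b n - b (n + 1) ∧
      b n - b (n + 1) ≤ 3 * cc / 2 * (a n - a (n + 1)) := by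
    intro n hn
    have hg : 0 < a n - a (n + 1) := sub_pos.mpr (hdec n hn)
    have hb_eq : b n - b (n + 1) = cc * (a n - a (n + 1)) + (t (K n) - t (K (n + 1))) := by
      rw [hbdef]
      ring
    rcases hKstep n hn with heq | ⟨hmn, hsucc⟩
    · rw [hb_eq, heq]
      constructor <;> nlinarith [hccpos]
    · have hGg : a n - a (n + 1) = G (K n + 1) := by
        rw [hms] at hmn
        rw [hGdef, ← hmn]
      have ht1 : t (K n) ≤ cc / 4 * G (K n + 1) := le_trans (htη (K n)) (hη_le (K n))
      have ht2 : t (K n + 1) ≤ cc / 4 * G (K n + 1) := by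
        refine le_trans (htη (K n + 1)) ?_
        have hmax : max (K n + 1) 1 = K n + 1 := by omega
        rw [hηmin (K n + 1), hmax]
        exact mul_le_mul_of_nonneg_left (min_le_left _ _) (by positivity)
      have ht3 := ht0 (K n)
      have ht4 := ht0 (K n + 1)
      rw [hb_eq, hsucc, hGg]
      constructor <;> nlinarith [hccpos]
  -- Step 7 : build f and conclude
  obtain ⟨f, hfbnd, hfnode⟩ := interp_lemma a b cc hccpos
    (fun n hn => hpos n hn) (fun n hn => hdec n hn) hlim hbB
  refine ⟨f, ⟨2 / cc + 2 * cc, ?_, ?_⟩, fun n hn => by rw [hfnode n hn]; exact hbE n hn⟩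
  · have h1 : 2 / cc * cc = 2 := div_mul_cancel₀ 2 (ne_of_gt hccpos)
    nlinarith [sq_nonneg (cc - 1), hccpos, h1]
  · have hLpos : 0 < 2 / cc + 2 * cc := by positivity
    have hL2 : (2 / cc + 2 * cc)⁻¹ ≤ cc / 2 := by
      have h1 : 2 / cc ≤ 2 / cc + 2 * cc := by nlinarith [hccpos]
      have h2 : (2 / cc + 2 * cc)⁻¹ ≤ (2 / cc)⁻¹ :=
        inv_anti₀ (div_pos two_pos hccpos) h1
      rw [inv_div] at h2
      exact h2
    have hL3 : 3 * cc / 2 ≤ 2 / cc + 2 * cc := by nlinarith [hccpos, div_pos two_pos hccpos]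
    intro x y
    rcases lt_trichotomy x y with hxy | hxy | hxy
    · obtain ⟨hlo, hhi⟩ := hfbnd y x hxy
      have hpos1 : 0 < f y - f x := lt_of_lt_of_le (by nlinarith [hccpos]) hlo
      have habs1 : |f x - f y| = f y - f x := by
        rw [abs_sub_comm, abs_of_pos hpos1]
      have habs2 : |x - y| = y - x := by
        rw [abs_sub_comm, abs_of_pos (by linarith)]
      rw [habs1, habs2]
      constructor
      · calc (2 / cc + 2 * cc)⁻¹ * (y - x) ≤ cc / 2 * (y - x) := by nlinarith [hL2]
          _ ≤ f y - f x := hlo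
      · calc f y - f x ≤ 3 * cc / 2 * (y - x) := hhi
          _ ≤ (2 / cc + 2 * cc) * (y - x) := by nlinarith [hL3]
    · subst hxy
      simp [hLpos.le]
    · obtain ⟨hlo, hhi⟩ := hfbnd x y hxy
      have hpos1 : 0 < f x - f y := lt_of_lt_of_le (by nlinarith [hccpos]) hlo
      have habs1 : |f x - f y| = f x - f y := abs_of_pos hpos1
      have habs2 : |x - y| = x - y := abs_of_pos (by linarith)
      rw [habs1, habs2]
      constructor
      · calc (2 / cc + 2 * cc)⁻¹ * (x - y) ≤ cc / 2 * (x - y) := by nlinarith [hL2]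
          _ ≤ f x - f y := hlo
      · calc f x - f y ≤ 3 * cc / 2 * (x - y) := hhi
          _ ≤ (2 / cc + 2 * cc) * (x - y) := by nlinarith [hL3]
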